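/- Let β be a stable exponent sequence, let (a_{n,k}) be a Köthe matrix, and let θ : ℕ → ℂ satisfy θ ∈ Λ_1(β). Assume that for every positive integer k there exist m ∈ ℕ and C > 0 such that e^{β_n/k} ≤ C · a_{n,m} for all n ∈ ℕ. Then for every positive integer k there exist m ∈ ℕ and C' > 0 such that ∑_{j=0}^∞ |θ_{j+n}| · e^{-β_j/k} ≤ C' · a_{n,m} for all n ∈ ℕ (the continuity condition for the Hankel operator H_θ : K(a_{n,k}) → Λ_1(β)). -/

import Mathlib

/-- If `β` is a stable exponent sequence, `θ ∈ Λ_1(β)`, and for every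
positive integer `k` there are `m`, `C > 0` with `e^{β_n/k} ≤ C a_{n,m}`, then the
Hankel operator `H_θ : K(a) → Λ_1(β)` satisfies the continuity condition. -/
theorem hankel_to_finite_type_continuous
    (a : ℕ → ℕ → ℝ) (β : ℕ → ℝ) (θ : ℕ → ℂ)
    (ha_nonneg : ∀ n k, 0 ≤ a n k) (ha_mono : ∀ n k, a n k ≤ a n (k + 1))
    (ha_pos : ∀ n, ∃ k, 0 < a n k)
    (hβ_nonneg : ∀ n, 0 ≤ β n) (hβ_mono : Monotone β)
    (hβ_tendsto : Filter.Tendsto β Filter.atTop Filter.atTop)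
    (hβ_stable : ∃ M : ℝ, 0 < M ∧ ∀ n : ℕ, β (2 * n) ≤ M * β n)
    (hθ : ∀ k : ℕ, 0 < k → Summable fun n : ℕ => ‖θ n‖ * Real.exp (-β n / (k : ℝ)))
    (hcond : ∀ k : ℕ, 0 < k → ∃ m : ℕ, ∃ C : ℝ, 0 < C ∧
      ∀ n : ℕ, Real.exp (β n / (k : ℝ)) ≤ C * a n m) :
    ∀ k : ℕ, 0 < k → ∃ m : ℕ, ∃ C' : ℝ, 0 < C' ∧
      ∀ n : ℕ, (∑' j : ℕ, ‖θ (j + n)‖ * Real.exp (-β j / (k : ℝ))) ≤ C' * a n m := by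
  intro k hk
  obtain ⟨M, hM, hstab⟩ := hβ_stable
  obtain ⟨m, C, hC, hCa⟩ := hcond k hk
  -- choose k₁ ≥ k * M
  set k₁ : ℕ := max 1 (Nat.ceil ((k : ℝ) * M)) with hk₁def
  have hk₁pos : 0 < k₁ := lt_of_lt_of_le Nat.one_pos (le_max_left _ _)
  have hk₁ge : (k : ℝ) * M ≤ (k₁ : ℝ) := by
    calc (k : ℝ) * M ≤ (Nat.ceil ((k : ℝ) * M) : ℝ) := Nat.le_ceil _
    _ ≤ (k₁ : ℝ) := by exact_mod_cast Nat.cast_le.mpr (le_max_right _ _)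
  have hkpos : (0 : ℝ) < k := by exact_mod_cast hk
  have hkM : (0 : ℝ) < (k : ℝ) * M := mul_pos hkpos hM
  have hk₁pos' : (0 : ℝ) < (k₁ : ℝ) := lt_of_lt_of_le hkM hk₁ge
  -- key inequality: β (j+n) ≤ M * (β j + β n)
  have hsub : ∀ j n : ℕ, β (j + n) ≤ M * (β j + β n) := by
    intro j n
    have h1 : j + n ≤ 2 * max j n := by
      rcases le_total j n with h | h <;> simp [max_eq_right, max_eq_left, h] <;> omega
    have h2 : β (j + n) ≤ β (2 * max j n) := hβ_mono h1
    have h3 : β (2 * max j n) ≤ M * β (max j n) := hstab _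
    have h4 : β (max j n) ≤ β j + β n := by
      rcases le_total j n with h | h
      · rw [max_eq_right h]; linarith [hβ_nonneg j]
      · rw [max_eq_left h]; linarith [hβ_nonneg n]
    calc β (j + n) ≤ M * β (max j n) := le_trans h2 h3
    _ ≤ M * (β j + β n) := by nlinarith
  -- g is the Λ₁ weight at level k₁
  set g : ℕ → ℝ := fun i => ‖θ i‖ * Real.exp (-β i / (k₁ : ℝ)) with hg
  have hgsum : Summable g := hθ k₁ hk₁pos
  set S : ℝ := ∑' i, g i with hS
  have hSnonneg : 0 ≤ S := tsum_nonneg fun i => by rw [hg]; positivity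
  refine ⟨m, (S + 1) * C, by positivity, ?_⟩
  intro n
  have hshift : Summable fun j : ℕ => g (j + n) := (summable_nat_add_iff n).2 hgsum
  -- pointwise bound
  have hpt : ∀ j : ℕ, ‖θ (j + n)‖ * Real.exp (-β j / (k : ℝ)) ≤
      g (j + n) * Real.exp (β n / (k : ℝ)) := by
    intro j
    have hb : β (j + n) / (k₁ : ℝ) ≤ β j / (k : ℝ) + β n / (k : ℝ) := by
      have h1 : β (j + n) / (k₁ : ℝ) ≤ β (j + n) / ((k : ℝ) * M) :=
        div_le_div_of_nonneg_left (hβ_nonneg _) hkM hk₁ge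
      have h2 : β (j + n) / ((k : ℝ) * M) ≤ (β j + β n) / (k : ℝ) := by
        rw [div_le_div_iff₀ hkM hkpos]
        have := hsub j n
        nlinarith [hβ_nonneg j, hβ_nonneg n]
      calc β (j + n) / (k₁ : ℝ) ≤ (β j + β n) / (k : ℝ) := le_trans h1 h2
      _ = β j / (k : ℝ) + β n / (k : ℝ) := add_div _ _ _
    have hexp : Real.exp (-β j / (k : ℝ)) ≤
        Real.exp (-β (j + n) / (k₁ : ℝ)) * Real.exp (β n / (k : ℝ)) := by
      rw [← Real.exp_add]
      apply Real.exp_le_exp.2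
      have : -β j / (k : ℝ) = -(β j / (k : ℝ)) := by ring
      have : -β (j + n) / (k₁ : ℝ) = -(β (j + n) / (k₁ : ℝ)) := by ring
      linarith [hb, neg_div (k:ℝ) (β j), neg_div (k₁:ℝ) (β (j+n))]
    calc ‖θ (j + n)‖ * Real.exp (-β j / (k : ℝ))
        ≤ ‖θ (j + n)‖ * (Real.exp (-β (j + n) / (k₁ : ℝ)) * Real.exp (β n / (k : ℝ))) :=
          mul_le_mul_of_nonneg_left hexp (norm_nonneg _)
      _ = g (j + n) * Real.exp (β n / (k : ℝ)) := by rw [hg]; ring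
  have hbound_sum : Summable fun j : ℕ => g (j + n) * Real.exp (β n / (k : ℝ)) :=
    hshift.mul_right _
  have hLHS : Summable fun j : ℕ => ‖θ (j + n)‖ * Real.exp (-β j / (k : ℝ)) := by
    apply Summable.of_nonneg_of_le _ hpt hbound_sum
    intro j
    positivity
  have hshift_le : (∑' j : ℕ, g (j + n)) ≤ S := by
    apply hshift.tsum_le_tsum_of_inj (fun j => j + n)
      (add_left_injective n)
      (fun c _ => by rw [hg]; positivity)
      (fun j => le_refl _) hgsum
  have hstep : (∑' j : ℕ, ‖θ (j + n)‖ * Real.exp (-β j / (k : ℝ))) ≤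
      S * Real.exp (β n / (k : ℝ)) := by
    calc (∑' j : ℕ, ‖θ (j + n)‖ * Real.exp (-β j / (k : ℝ)))
        ≤ ∑' j : ℕ, g (j + n) * Real.exp (β n / (k : ℝ)) :=
          hLHS.tsum_le_tsum hpt hbound_sum
      _ = (∑' j : ℕ, g (j + n)) * Real.exp (β n / (k : ℝ)) := tsum_mul_right
      _ ≤ S * Real.exp (β n / (k : ℝ)) :=
          mul_le_mul_of_nonneg_right hshift_le (Real.exp_pos _).le
  have ham : 0 ≤ a n m := ha_nonneg n m
  have : S * Real.exp (β n / (k : ℝ)) ≤ (S + 1) * (C * a n m) := by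
    have h1 : Real.exp (β n / (k : ℝ)) ≤ C * a n m := hCa n
    nlinarith [Real.exp_pos (β n / (k : ℝ))]
  linarith [hstep]
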